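/- Suppose $f_{ij} \geq 0$ for all $i \neq j$ in $\{1,\dots,N\}$ and the fourth-order moment conditions $\sum_{j} f_{ij} r_{ij}^\alpha = 0$ hold for every multi-index $\alpha$ with $|\alpha| = 4$, where $r_{ij} = x_j - x_i$ and $r_{ii} = 0$. Then $\sum_{j\neq i} f_{ij} |r_{ij}|^4 = 0$, hence $f_{ij} |r_{ij}| = 0$ for every $j \neq i$; in particular if all particle positions $x_j$ ($j \neq i$) are distinct from $x_i$, then $f_{ij} = 0$ for all $j \neq i$, which contradicts the second-order condition $\sum_j f_{ij} ((r_{ij}^x)^2 + (r_{ij}^y)^2) = 4$. Thus no nonnegative stencil on distinct points can satisfy both the fourth-order moment conditions and the second-order consistency conditions. -/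

import Mathlib

/-- For a nonnegative stencil satisfying the fourth-order moment
conditions one has `∑_{j≠i} f_ij |r_ij|⁴ = 0`, hence `f_ij = 0` for all `j ≠ i`
when the points are distinct; this contradicts the second-order consistency
condition, so no such stencil exists. -/
theorem stmt_1 {N : ℕ} (x : Fin N → ℝ × ℝ) (f : Fin N → Fin N → ℝ) (i : Fin N)
    (hnonneg : ∀ j, j ≠ i → 0 ≤ f i j)
    (hdistinct : ∀ j, j ≠ i → x j ≠ x i)
    (hfourth : ∀ a b : ℕ, a + b = 4 →
      ∑ j, f i j * ((x j).1 - (x i).1)^a * ((x j).2 - (x i).2)^b = 0) :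
    (∑ j ∈ Finset.univ.erase i,
        f i j * (((x j).1 - (x i).1)^2 + ((x j).2 - (x i).2)^2)^2 = 0) ∧
    (∀ j, j ≠ i → f i j = 0) ∧
    ¬ (∑ j, f i j * (((x j).1 - (x i).1)^2 + ((x j).2 - (x i).2)^2) = 4) := by
  have h40 := hfourth 4 0 rfl
  have h22 := hfourth 2 2 rfl
  have h04 := hfourth 0 4 rfl
  have hsum : ∑ j, f i j * (((x j).1 - (x i).1)^2 + ((x j).2 - (x i).2)^2)^2 = 0 := by
    have : ∑ j, f i j * (((x j).1 - (x i).1)^2 + ((x j).2 - (x i).2)^2)^2 =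
        (∑ j, f i j * ((x j).1 - (x i).1)^4 * ((x j).2 - (x i).2)^0)
        + 2 * (∑ j, f i j * ((x j).1 - (x i).1)^2 * ((x j).2 - (x i).2)^2)
        + (∑ j, f i j * ((x j).1 - (x i).1)^0 * ((x j).2 - (x i).2)^4) := by
      rw [Finset.mul_sum, ← Finset.sum_add_distrib, ← Finset.sum_add_distrib]
      apply Finset.sum_congr rfl
      intro j _; ring
    rw [this, h40, h22, h04]; ring
  have herase : ∑ j ∈ Finset.univ.erase i,
      f i j * (((x j).1 - (x i).1)^2 + ((x j).2 - (x i).2)^2)^2 = 0 := by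
    rw [← hsum]
    rw [Finset.sum_erase]
    simp
  have hzero : ∀ j, j ≠ i → f i j = 0 := by
    intro j hj
    have hall : ∀ k ∈ Finset.univ.erase i, 0 ≤
        f i k * (((x k).1 - (x i).1)^2 + ((x k).2 - (x i).2)^2)^2 := by
      intro k hk
      exact mul_nonneg (hnonneg k (Finset.ne_of_mem_erase hk)) (by positivity)
    have := (Finset.sum_eq_zero_iff_of_nonneg hall).mp herase j
      (Finset.mem_erase.mpr ⟨hj, Finset.mem_univ j⟩)
    rcases mul_eq_zero.mp this with h | h
    · exact h
    · exfalso
      have hx : x j ≠ x i := hdistinct j hj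
      have hne : ((x j).1 - (x i).1)^2 + ((x j).2 - (x i).2)^2 ≠ 0 := by
        intro h0
        have h1 : (x j).1 - (x i).1 = 0 ∧ (x j).2 - (x i).2 = 0 := by
          constructor <;> nlinarith [sq_nonneg ((x j).1 - (x i).1), sq_nonneg ((x j).2 - (x i).2)]
        exact hx (Prod.ext (by linarith [h1.1]) (by linarith [h1.2]))
      exact hne (pow_eq_zero_iff (by norm_num) |>.mp h)
  refine ⟨herase, hzero, ?_⟩
  intro h4
  have : ∑ j, f i j * (((x j).1 - (x i).1)^2 + ((x j).2 - (x i).2)^2) = 0 := by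
    apply Finset.sum_eq_zero
    intro j _
    by_cases hj : j = i
    · subst hj; simp
    · rw [hzero j hj]; ring
  linarith [h4, this]
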